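/- Second-order quantum-jump expansion: let L be an operator on a finite-dimensional Hilbert space H, let A = C² be an auxiliary qubit, and define the Hermitian operator J_L = L† ⊗ |0⟩⟨1|_A + L ⊗ |1⟩⟨0|_A on H ⊗ A. Then for the dilation channel 𝒥(t)(ρ) := Tr_A[ e^{−iJ_L√t} (ρ ⊗ |0⟩⟨0|_A) e^{iJ_L√t} ], the terms of order t^{1/2} and t^{3/2} vanish after the partial trace, and 𝒥(t)(ρ) = ρ + t( LρL† − (1/2){L†L, ρ} ) + O(t²), i.e., the first-order-in-t term equals the Lindbladian ℒ_L(ρ). -/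

import Mathlib

open Matrix
open scoped Kronecker
open Filter Set
open scoped Topology

namespace Stmt16

variable {n : Type*} [Fintype n] [DecidableEq n]

/-- Partial trace over the auxiliary qubit A. -/
noncomputable def ptraceA (X : Matrix (n × Fin 2) (n × Fin 2) ℂ) : Matrix n n ℂ :=
  Matrix.of fun i j => ∑ a : Fin 2, X (i, a) (j, a)

/-- J_L = L† ⊗ |0⟩⟨1| + L ⊗ |1⟩⟨0| on H ⊗ C². -/
def J (L : Matrix n n ℂ) : Matrix (n × Fin 2) (n × Fin 2) ℂ :=
  Lᴴ ⊗ₖ Matrix.single (0 : Fin 2) (1 : Fin 2) (1 : ℂ)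
    + L ⊗ₖ Matrix.single (1 : Fin 2) (0 : Fin 2) (1 : ℂ)

/-- ρ ⊗ |0⟩⟨0|. -/
def sigma0 (ρ : Matrix n n ℂ) : Matrix (n × Fin 2) (n × Fin 2) ℂ :=
  ρ ⊗ₖ Matrix.single (0 : Fin 2) (0 : Fin 2) (1 : ℂ)

/-- The dilation channel 𝒥(t)(ρ) = Tr_A[e^{−iJ√t} (ρ ⊗ |0⟩⟨0|) e^{iJ√t}]. -/
noncomputable def dil (L ρ : Matrix n n ℂ) (t : ℝ) : Matrix n n ℂ :=
  ptraceA (NormedSpace.exp (((-Complex.I) * ((Real.sqrt t : ℝ) : ℂ)) • J L)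
    * sigma0 ρ * NormedSpace.exp ((Complex.I * ((Real.sqrt t : ℝ) : ℂ)) • J L))

/-- The Lindbladian ℒ_L(ρ) = LρL† − (1/2){L†L, ρ}. -/
noncomputable def lindbladian (L ρ : Matrix n n ℂ) : Matrix n n ℂ :=
  L * ρ * Lᴴ - (1 / 2 : ℂ) • (Lᴴ * L * ρ + ρ * (Lᴴ * L))

/-! ### Auxiliary algebra -/

abbrev E (a b : Fin 2) : Matrix (Fin 2) (Fin 2) ℂ := Matrix.single a b (1 : ℂ)

lemma kk (A B : Matrix n n ℂ) (a b c d : Fin 2) :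
    (A ⊗ₖ E a b) * (B ⊗ₖ E c d) = if b = c then (A * B) ⊗ₖ E a d else 0 := by
  rw [← Matrix.mul_kronecker_mul]
  split
  · next h => subst h; rw [Matrix.single_mul_single_same, one_mul]
  · next hbc => rw [Matrix.single_mul_single_of_ne (h := hbc), Matrix.kronecker_zero]

lemma sigma0_eq (ρ : Matrix n n ℂ) : sigma0 ρ = ρ ⊗ₖ E 0 0 := rfl

lemma J_mul_kron (L A : Matrix n n ℂ) (a b : Fin 2) :
    J L * (A ⊗ₖ E a b) =
      (if (1 : Fin 2) = a then (Lᴴ * A) ⊗ₖ E 0 b else 0)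
        + (if (0 : Fin 2) = a then (L * A) ⊗ₖ E 1 b else 0) := by
  rw [J, add_mul, kk, kk]

lemma kron_mul_J (L A : Matrix n n ℂ) (a b : Fin 2) :
    (A ⊗ₖ E a b) * J L =
      (if b = (0 : Fin 2) then (A * Lᴴ) ⊗ₖ E a 1 else 0)
        + (if b = (1 : Fin 2) then (A * L) ⊗ₖ E a 0 else 0) := by
  rw [J, mul_add, kk, kk]

lemma ptraceA_kron (A : Matrix n n ℂ) (a b : Fin 2) :
    ptraceA (A ⊗ₖ E a b) = if a = b then A else 0 := by
  ext i j
  fin_cases a <;> fin_cases b <;>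
    simp [ptraceA, Matrix.single, Fin.sum_univ_two, Matrix.kroneckerMap_apply]

lemma ptraceA_sub (X Y : Matrix (n × Fin 2) (n × Fin 2) ℂ) :
    ptraceA (X - Y) = ptraceA X - ptraceA Y := by
  ext i j; simp [ptraceA, Finset.sum_sub_distrib]

lemma ptraceA_add (X Y : Matrix (n × Fin 2) (n × Fin 2) ℂ) :
    ptraceA (X + Y) = ptraceA X + ptraceA Y := by
  ext i j; simp [ptraceA, Finset.sum_add_distrib]

lemma ptraceA_smul (r : ℂ) (X : Matrix (n × Fin 2) (n × Fin 2) ℂ) :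
    ptraceA (r • X) = r • ptraceA X := by
  ext i j; simp [ptraceA, Finset.mul_sum, mul_add]

lemma ptraceA_zero : ptraceA (0 : Matrix (n × Fin 2) (n × Fin 2) ℂ) = 0 := by
  ext i j; simp [ptraceA]

lemma C1_eq (L ρ : Matrix n n ℂ) :
    J L * sigma0 ρ - sigma0 ρ * J L = (L * ρ) ⊗ₖ E 1 0 - (ρ * Lᴴ) ⊗ₖ E 0 1 := by
  rw [sigma0_eq, J_mul_kron, kron_mul_J]
  norm_num

lemma C2_eq (L ρ : Matrix n n ℂ) :
    J L * (J L * sigma0 ρ - sigma0 ρ * J L) - (J L * sigma0 ρ - sigma0 ρ * J L) * J L =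
      ((Lᴴ * (L * ρ)) ⊗ₖ E 0 0 + (ρ * Lᴴ * L) ⊗ₖ E 0 0)
        - ((L * ρ * Lᴴ) ⊗ₖ E 1 1 + (L * (ρ * Lᴴ)) ⊗ₖ E 1 1) := by
  rw [C1_eq, mul_sub, sub_mul, J_mul_kron, J_mul_kron, kron_mul_J, kron_mul_J]
  norm_num
  abel

lemma partA (L ρ : Matrix n n ℂ) : ptraceA (J L * sigma0 ρ - sigma0 ρ * J L) = 0 := by
  rw [C1_eq, ptraceA_sub, ptraceA_kron, ptraceA_kron]
  norm_num

lemma partB (L ρ : Matrix n n ℂ) :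
    ptraceA (J L * (J L * (J L * sigma0 ρ - sigma0 ρ * J L)
          - (J L * sigma0 ρ - sigma0 ρ * J L) * J L)
        - (J L * (J L * sigma0 ρ - sigma0 ρ * J L)
          - (J L * sigma0 ρ - sigma0 ρ * J L) * J L) * J L) = 0 := by
  rw [C2_eq]
  simp only [mul_sub, sub_mul, mul_add, add_mul, J_mul_kron, kron_mul_J,
    ptraceA_sub, ptraceA_add, ptraceA_kron]
  norm_num [ptraceA_zero, ptraceA_kron]

lemma traceC2 (L ρ : Matrix n n ℂ) :
    ptraceA (J L * (J L * sigma0 ρ - sigma0 ρ * J L)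
        - (J L * sigma0 ρ - sigma0 ρ * J L) * J L) =
      (Lᴴ * (L * ρ) + ρ * Lᴴ * L) - (L * ρ * Lᴴ + L * (ρ * Lᴴ)) := by
  rw [C2_eq, ptraceA_sub, ptraceA_add, ptraceA_add, ptraceA_kron, ptraceA_kron,
    ptraceA_kron, ptraceA_kron]
  norm_num

lemma D2_val (L ρ : Matrix n n ℂ) :
    ptraceA ((((-Complex.I) • J L) * ((((-Complex.I) • J L)) * sigma0 ρ
          - sigma0 ρ * ((-Complex.I) • J L)))
        - ((((-Complex.I) • J L) * sigma0 ρ - sigma0 ρ * ((-Complex.I) • J L))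
          * ((-Complex.I) • J L))) = (2 : ℂ) • lindbladian L ρ := by
  have h : ((-Complex.I) * (-Complex.I)) = (-1 : ℂ) := by
    rw [neg_mul_neg, Complex.I_mul_I]
  simp only [smul_mul_assoc, mul_smul_comm, ← smul_sub, smul_smul, h]
  rw [neg_smul, one_smul, show ∀ X : Matrix (n × Fin 2) (n × Fin 2) ℂ, -X = (-1 : ℂ) • X
    from fun X => by simp, ptraceA_smul, traceC2, lindbladian]
  simp only [mul_assoc]
  module

lemma D1_val (L ρ : Matrix n n ℂ) :
    ptraceA ((((-Complex.I) • J L)) * sigma0 ρ - sigma0 ρ * ((-Complex.I) • J L)) = 0 := by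
  have h : (((-Complex.I) • J L)) * sigma0 ρ - sigma0 ρ * ((-Complex.I) • J L)
      = (-Complex.I) • (J L * sigma0 ρ - sigma0 ρ * J L) := by
    simp [smul_mul_assoc, mul_smul_comm, smul_sub]
  rw [h, ptraceA_smul, partA, smul_zero]

/-! ### Analytic auxiliary lemmas -/

lemma compOfReal {F : Type*} [NormedAddCommGroup F] [NormedSpace ℂ F] {e : ℂ → F} {e' : F}
    {z : ℝ} (hf : HasDerivAt e e' z) : HasDerivAt (fun y : ℝ => e y) e' z := by
  simpa [Function.comp_def] using (hf.hasFDerivAt.restrictScalars ℝ).comp_hasDerivAt z Complex.ofRealCLM.hasDerivAt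

section Exp

variable {m : Type*} [Fintype m] [DecidableEq m]

noncomputable def Hmat (M σ : Matrix m m ℂ) (s : ℝ) : Matrix m m ℂ :=
  NormedSpace.exp (((s : ℝ) : ℂ) • M) * σ * NormedSpace.exp (((s : ℝ) : ℂ) • (-M))

lemma Hmat_zero (M σ : Matrix m m ℂ) : Hmat M σ 0 = σ := by
  simp [Hmat]

lemma hasDerivAt_Hmat_entry (M σ : Matrix m m ℂ) (p q : m) (s : ℝ) :
    HasDerivAt (fun s : ℝ => Hmat M σ s p q) ((M * Hmat M σ s - Hmat M σ s * M) p q) s := by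
  letI : SeminormedRing (Matrix m m ℂ) := Matrix.linftyOpSemiNormedRing
  letI : NormedRing (Matrix m m ℂ) := Matrix.linftyOpNormedRing
  letI : NormedAlgebra ℂ (Matrix m m ℂ) := Matrix.linftyOpNormedAlgebra
  letI : NormedAlgebra ℝ (Matrix m m ℂ) := Matrix.linftyOpNormedAlgebra
  have hU : HasDerivAt (fun y : ℝ => NormedSpace.exp (((y : ℝ) : ℂ) • M))
      (M * NormedSpace.exp (((s : ℝ) : ℂ) • M)) s :=
    compOfReal (hasDerivAt_exp_smul_const' M ((s : ℝ) : ℂ))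
  have hV : HasDerivAt (fun y : ℝ => NormedSpace.exp (((y : ℝ) : ℂ) • (-M)))
      (NormedSpace.exp (((s : ℝ) : ℂ) • (-M)) * (-M)) s :=
    compOfReal (hasDerivAt_exp_smul_const (-M) ((s : ℝ) : ℂ))
  have hH : HasDerivAt (fun y : ℝ => Hmat M σ y) (M * Hmat M σ s - Hmat M σ s * M) s := by
    have h2 := (hU.mul_const σ).fun_mul hV
    convert h2 using 1
    · rfl
    · rfl
    · rfl
    · rfl
    simp only [Hmat, mul_assoc, mul_neg, sub_eq_add_neg]
  have cont : Continuous (fun X : Matrix m m ℂ => X p q) :=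
    (continuous_apply q).comp (continuous_apply p)
  let φ : Matrix m m ℂ →L[ℝ] ℂ :=
    { toFun := fun X => X p q, map_add' := fun _ _ => rfl, map_smul' := fun _ _ => rfl,
      cont := cont }
  exact φ.hasFDerivAt.comp_hasDerivAt s hH

end Exp

lemma quad_limit_real {u u1 : ℝ → ℝ} {a : ℝ}
    (hu : ∀ s, HasDerivAt u (u1 s) s) (h10 : u1 0 = 0) (hu1 : HasDerivAt u1 (2 * a) 0) :
    Tendsto (fun s : ℝ => (u s - u 0) / s ^ 2) (𝓝[>] (0 : ℝ)) (𝓝 a) := by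
  apply HasDerivAt.lhopital_zero_right_on_Ioo (a := 0) (b := 1) one_pos
    (f' := u1) (g' := fun x => 2 * x)
  · exact fun x _ => (hu x).sub_const (u 0)
  · intro x _
    simpa using hasDerivAt_pow 2 x
  · intro x hx
    exact mul_ne_zero two_ne_zero (ne_of_gt hx.1)
  · have : Tendsto (fun s => u s - u 0) (𝓝 0) (𝓝 (u 0 - u 0)) :=
      ((hu 0).continuousAt.tendsto).sub tendsto_const_nhds
    simpa using this.mono_left nhdsWithin_le_nhds
  · have : Tendsto (fun x : ℝ => x ^ 2) (𝓝 0) (𝓝 ((0 : ℝ) ^ 2)) := (continuous_pow 2).tendsto 0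
    simpa using this.mono_left nhdsWithin_le_nhds
  · have hslope : Tendsto (fun x : ℝ => u1 x / x) (𝓝[>] 0) (𝓝 (2 * a)) := by
      have h := hasDerivAt_iff_tendsto_slope.mp hu1
      have h2 : Tendsto (slope u1 0) (𝓝[>] 0) (𝓝 (2 * a)) :=
        h.mono_left (nhdsWithin_mono _ (fun x hx => ne_of_gt hx))
      refine h2.congr fun x => ?_
      simp [slope, h10, div_eq_inv_mul]
    have h3 := hslope.div_const 2
    rw [show 2 * a / 2 = a by ring] at h3
    exact h3.congr fun x => by rw [div_div, mul_comm]

lemma quad_limit {g g1 : ℝ → ℂ} {c : ℂ} (hg : ∀ s, HasDerivAt g (g1 s) s)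
    (h10 : g1 0 = 0) (hg1 : HasDerivAt g1 (2 * c) 0) :
    Tendsto (fun s : ℝ => (g s - g 0) / ((s : ℂ) ^ 2)) (𝓝[>] (0 : ℝ)) (𝓝 c) := by
  have main : ∀ φ : ℂ →L[ℝ] ℝ, Tendsto (fun s : ℝ => (φ (g s) - φ (g 0)) / s ^ 2)
      (𝓝[>] (0 : ℝ)) (𝓝 (φ c)) := by
    intro φ
    have hu : ∀ s, HasDerivAt (fun s : ℝ => φ (g s)) (φ (g1 s)) s := fun s =>
      φ.hasFDerivAt.comp_hasDerivAt s (hg s)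
    have hu1 : HasDerivAt (fun s : ℝ => φ (g1 s)) (2 * φ c) 0 := by
      have h1 := φ.hasFDerivAt.comp_hasDerivAt 0 hg1
      have h2 : φ (2 * c) = 2 * φ c := by
        have h3 : (2 : ℂ) * c = (2 : ℝ) • c := by
          simp [Complex.real_smul]
        rw [h3, _root_.map_smul]
        simp [smul_eq_mul]
      simpa [h2, Function.comp_def] using h1
    exact quad_limit_real hu (by simp [h10]) hu1
  have hre := main Complex.reCLM
  have him := main Complex.imCLM
  have hre' : Tendsto (fun s : ℝ => ((((g s - g 0) / ((s : ℂ) ^ 2)).re : ℝ) : ℂ)) (𝓝[>] (0 : ℝ))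
      (𝓝 ((c.re : ℝ) : ℂ)) := by
    apply Tendsto.comp (Complex.continuous_ofReal.tendsto _)
    refine hre.congr fun s => ?_
    rw [show ((s : ℂ) ^ 2) = ((s ^ 2 : ℝ) : ℂ) by push_cast; ring, Complex.div_ofReal_re]
    simp
  have him' : Tendsto (fun s : ℝ => ((((g s - g 0) / ((s : ℂ) ^ 2)).im : ℝ) : ℂ)) (𝓝[>] (0 : ℝ))
      (𝓝 ((c.im : ℝ) : ℂ)) := by
    apply Tendsto.comp (Complex.continuous_ofReal.tendsto _)
    refine him.congr fun s => ?_
    rw [show ((s : ℂ) ^ 2) = ((s ^ 2 : ℝ) : ℂ) by push_cast; ring, Complex.div_ofReal_im]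
    simp
  have hcomb := hre'.add (him'.mul_const Complex.I)
  rw [show ((c.re : ℂ) + (c.im : ℂ) * Complex.I) = c from Complex.re_add_im c] at hcomb
  exact hcomb.congr fun s => Complex.re_add_im _

/-! ### The main theorem -/

/-- Second-order quantum-jump expansion: the half-integer power (odd-commutator) terms vanish
after the partial trace, and the first-order-in-`t` term of the dilation channel equals the
Lindbladian. -/
theorem dilation_first_order (L ρ : Matrix n n ℂ) :
    ptraceA (J L * sigma0 ρ - sigma0 ρ * J L) = 0 ∧
      ptraceA (J L * (J L * (J L * sigma0 ρ - sigma0 ρ * J L)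
            - (J L * sigma0 ρ - sigma0 ρ * J L) * J L)
          - (J L * (J L * sigma0 ρ - sigma0 ρ * J L)
            - (J L * sigma0 ρ - sigma0 ρ * J L) * J L) * J L) = 0 ∧
      ∀ i j : n, HasDerivWithinAt (fun t : ℝ => dil L ρ t i j) (lindbladian L ρ i j)
        (Set.Ici (0 : ℝ)) 0 := by
  refine ⟨partA L ρ, partB L ρ, ?_⟩
  intro i j
  set M : Matrix (n × Fin 2) (n × Fin 2) ℂ := (-Complex.I) • J L with hM
  set σ : Matrix (n × Fin 2) (n × Fin 2) ℂ := sigma0 ρ with hσ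
  -- dil as Hmat of sqrt
  have e1 : ∀ t : ℝ, ((Real.sqrt t : ℝ) : ℂ) • M = ((-Complex.I) * ((Real.sqrt t : ℝ) : ℂ)) • J L := by
    intro t; rw [hM, smul_smul, mul_comm]
  have e2 : ∀ t : ℝ, ((Real.sqrt t : ℝ) : ℂ) • (-M) = (Complex.I * ((Real.sqrt t : ℝ) : ℂ)) • J L := by
    intro t; rw [hM, ← neg_smul, neg_neg, smul_smul, mul_comm]
  have hd : ∀ t : ℝ, dil L ρ t = ptraceA (Hmat M σ (Real.sqrt t)) := by
    intro t
    unfold dil Hmat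
    rw [e1, e2, hσ]
  -- the entry functions
  set g : ℝ → ℂ := fun s => ptraceA (Hmat M σ s) i j with hg_def
  set g1 : ℝ → ℂ := fun s => ptraceA (M * Hmat M σ s - Hmat M σ s * M) i j with hg1_def
  have hptr : ∀ (X : Matrix (n × Fin 2) (n × Fin 2) ℂ), ptraceA X i j = ∑ a : Fin 2, X (i, a) (j, a) :=
    fun X => rfl
  have hg : ∀ s, HasDerivAt g (g1 s) s := by
    intro s
    have h := HasDerivAt.fun_sum (u := (Finset.univ : Finset (Fin 2)))
      (A := fun a (y : ℝ) => Hmat M σ y (i, a) (j, a))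
      (A' := fun a => (M * Hmat M σ s - Hmat M σ s * M) (i, a) (j, a))
      (fun a _ => hasDerivAt_Hmat_entry M σ (i, a) (j, a) s)
    simpa [hg_def, hg1_def, hptr] using h
  have hg10 : g1 0 = 0 := by
    rw [hg1_def]
    simp only [Hmat_zero]
    rw [hptr, ← hptr, hσ, hM]
    rw [D1_val L ρ]
    simp
  have hg1d : HasDerivAt g1 (2 * lindbladian L ρ i j) 0 := by
    have hentry : ∀ p q : n × Fin 2,
        HasDerivAt (fun s : ℝ => (M * Hmat M σ s - Hmat M σ s * M) p q)
          ((M * (M * σ - σ * M) - (M * σ - σ * M) * M) p q) 0 := by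
      intro p q
      have h1 : HasDerivAt (fun s : ℝ => (M * Hmat M σ s) p q) ((M * (M * σ - σ * M)) p q) 0 := by
        simp only [Matrix.mul_apply]
        refine HasDerivAt.fun_sum fun r _ => ?_
        have h := (hasDerivAt_Hmat_entry M σ r q 0).const_mul (M p r)
        simpa [Hmat_zero] using h
      have h2 : HasDerivAt (fun s : ℝ => (Hmat M σ s * M) p q) (((M * σ - σ * M) * M) p q) 0 := by
        simp only [Matrix.mul_apply]
        refine HasDerivAt.fun_sum fun r _ => ?_
        have h := (hasDerivAt_Hmat_entry M σ p r 0).mul_const (M r q)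
        simpa [Hmat_zero] using h
      have := h1.fun_sub h2
      simpa [Matrix.sub_apply] using this
    have h := HasDerivAt.fun_sum (u := (Finset.univ : Finset (Fin 2)))
      (A := fun a (y : ℝ) => (M * Hmat M σ y - Hmat M σ y * M) (i, a) (j, a))
      (A' := fun a => (M * (M * σ - σ * M) - (M * σ - σ * M) * M) (i, a) (j, a))
      (fun a _ => hentry (i, a) (j, a))
    have hval : ∑ a : Fin 2, (M * (M * σ - σ * M) - (M * σ - σ * M) * M) (i, a) (j, a)
        = 2 * lindbladian L ρ i j := by
      rw [← hptr, hM, hσ, D2_val L ρ]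
      simp [smul_eq_mul]
    rw [← hval]
    simpa [hg1_def, hptr] using h
  -- the quadratic limit
  have hQL := quad_limit hg hg10 hg1d
  -- sqrt tendsto
  have hsqrt : Tendsto Real.sqrt (𝓝[>] (0 : ℝ)) (𝓝[>] (0 : ℝ)) := by
    rw [tendsto_nhdsWithin_iff]
    constructor
    · simpa [Real.sqrt_zero] using
        ((Real.continuous_sqrt.tendsto 0).mono_left nhdsWithin_le_nhds)
    · filter_upwards [self_mem_nhdsWithin] with t ht
      exact Real.sqrt_pos.2 ht
  have hcomp := hQL.comp hsqrt
  rw [hasDerivWithinAt_iff_tendsto_slope, Set.Ici_sdiff_left]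
  refine hcomp.congr' ?_
  filter_upwards [self_mem_nhdsWithin] with t ht
  have ht' : (0 : ℝ) < t := ht
  have hsq : ((Real.sqrt t : ℝ) : ℂ) ^ 2 = (t : ℂ) := by
    rw [show ((Real.sqrt t : ℝ) : ℂ) ^ 2 = ((Real.sqrt t ^ 2 : ℝ) : ℂ) by push_cast; ring,
      Real.sq_sqrt ht'.le]
  have hf0 : dil L ρ 0 i j = g 0 := by
    rw [hd 0, Real.sqrt_zero]
  have hft : dil L ρ t i j = g (Real.sqrt t) := by rw [hd t]
  rw [slope_def_module]
  simp only [sub_zero, Function.comp_apply]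
  rw [hf0, hft, hsq, Complex.real_smul, Complex.ofReal_inv, div_eq_inv_mul]
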